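/- For any m×n real matrix A, and any nonnegative m×m diagonal matrix P with trace 1, the vector discrepancy of A is at least √n · σ_min(P^{1/2} A). -/

import Mathlib

open Matrix
open scoped BigOperators

/-- The Euclidean norm of a vector. -/
noncomputable def enorm {ι : Type*} [Fintype ι] (v : ι → ℝ) : ℝ :=
  Real.sqrt (∑ i, (v i) ^ 2)

/-- The least singular value of a matrix: the infimum of `‖Bx‖₂` over unit vectors `x`. -/
noncomputable def smin {ι κ : Type*} [Fintype ι] [Fintype κ] (B : Matrix ι κ ℝ) : ℝ :=
  ⨅ x : {x : κ → ℝ // _root_.enorm x = 1}, _root_.enorm (B.mulVec x)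

lemma enorm_nonneg' {ι : Type*} [Fintype ι] (v : ι → ℝ) : 0 ≤ _root_.enorm v :=
  Real.sqrt_nonneg _

lemma enorm_sq' {ι : Type*} [Fintype ι] (v : ι → ℝ) : _root_.enorm v ^ 2 = ∑ i, (v i) ^ 2 :=
  Real.sq_sqrt (Finset.sum_nonneg fun i _ => sq_nonneg _)

lemma enorm_smul' {ι : Type*} [Fintype ι] (c : ℝ) (v : ι → ℝ) :
    _root_.enorm (c • v) = |c| * _root_.enorm v := by
  unfold _root_.enorm
  have : ∑ i, (c • v) i ^ 2 = c ^ 2 * ∑ i, (v i) ^ 2 := by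
    rw [Finset.mul_sum]; exact Finset.sum_congr rfl fun i _ => by simp [mul_pow]
  rw [this, Real.sqrt_mul (sq_nonneg c), Real.sqrt_sq_eq_abs]

lemma smin_nonneg' {ι κ : Type*} [Fintype ι] [Fintype κ] (B : Matrix ι κ ℝ) :
    0 ≤ smin B := by
  by_cases h : Nonempty {x : κ → ℝ // _root_.enorm x = 1}
  · exact le_ciInf fun x => enorm_nonneg' _
  · haveI := not_nonempty_iff.mp h
    rw [smin, iInf, Set.range_eq_empty, Real.sInf_empty]

lemma smin_mulVec_le' {ι κ : Type*} [Fintype ι] [Fintype κ] (B : Matrix ι κ ℝ)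
    (x : κ → ℝ) : smin B * _root_.enorm x ≤ _root_.enorm (B.mulVec x) := by
  by_cases hx : _root_.enorm x = 0
  · rw [hx, mul_zero]; exact enorm_nonneg' _
  · have hx' : 0 < _root_.enorm x := lt_of_le_of_ne (enorm_nonneg' _) (Ne.symm hx)
    have hy : _root_.enorm ((_root_.enorm x)⁻¹ • x) = 1 := by
      rw [enorm_smul', abs_of_pos (inv_pos.2 hx'), inv_mul_cancel₀ hx'.ne']
    have hbdd : BddBelow (Set.range fun y : {y : κ → ℝ // _root_.enorm y = 1} =>
        _root_.enorm (B.mulVec y)) := ⟨0, by rintro w ⟨z, rfl⟩; exact enorm_nonneg' _⟩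
    have h1 : smin B ≤ _root_.enorm (B.mulVec ((_root_.enorm x)⁻¹ • x)) :=
      ciInf_le hbdd ⟨(_root_.enorm x)⁻¹ • x, hy⟩
    rw [Matrix.mulVec_smul, enorm_smul', abs_of_pos (inv_pos.2 hx')] at h1
    have h2 := mul_le_mul_of_nonneg_right h1 hx'.le
    calc smin B * _root_.enorm x ≤ (_root_.enorm x)⁻¹ * _root_.enorm (B.mulVec x) * _root_.enorm x := h2
      _ = _root_.enorm (B.mulVec x) := by field_simp

theorem vecdisc_ge_spectral {m n : ℕ} (A : Matrix (Fin m) (Fin n) ℝ)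
    (P : Matrix (Fin m) (Fin m) ℝ)
    (hPdiag : P.IsDiag) (hPnn : ∀ i, 0 ≤ P i i) (hPtr : P.trace = 1)
    (u : Fin n → Fin n → ℝ) (hu : ∀ j, _root_.enorm (u j) = 1) :
    Real.sqrt n * smin (Matrix.diagonal (fun i => Real.sqrt (P i i)) * A) ≤
      ⨆ i : Fin m, _root_.enorm (fun l => ∑ j, A i j * u j l) := by
  set B := Matrix.diagonal (fun i => Real.sqrt (P i i)) * A with hB
  set v : Fin m → Fin n → ℝ := fun i l => ∑ j, A i j * u j l with hv
  set M := ⨆ i : Fin m, _root_.enorm (v i) with hM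
  have hMnn : 0 ≤ M := Real.iSup_nonneg fun i => enorm_nonneg' _
  have hs : 0 ≤ smin B := smin_nonneg' B
  have hBapp : ∀ (i : Fin m) (x : Fin n → ℝ),
      B.mulVec x i = Real.sqrt (P i i) * ∑ j, A i j * x j := by
    intro i x
    simp [hB, Matrix.mulVec, dotProduct, Matrix.mul_apply, Matrix.diagonal,
      Finset.mul_sum, mul_assoc]
  -- per-column inequality
  have h1 : ∀ l : Fin n, smin B ^ 2 * ∑ j, (u j l) ^ 2 ≤
      ∑ i, (B.mulVec (fun j => u j l) i) ^ 2 := by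
    intro l
    have := smin_mulVec_le' B (fun j => u j l)
    have h2 := pow_le_pow_left₀ (mul_nonneg hs (enorm_nonneg' _)) this 2
    rwa [mul_pow, enorm_sq', enorm_sq'] at h2
  -- total mass of u's
  have h2 : ∑ l : Fin n, ∑ j, (u j l) ^ 2 = (n : ℝ) := by
    rw [Finset.sum_comm]
    have : ∀ j : Fin n, ∑ l, (u j l) ^ 2 = 1 := by
      intro j; rw [← enorm_sq', hu j, one_pow]
    simp [this]
  -- rewrite the RHS sum
  have h3 : ∑ l : Fin n, ∑ i, (B.mulVec (fun j => u j l) i) ^ 2 =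
      ∑ i, P i i * ∑ l, (v i l) ^ 2 := by
    rw [Finset.sum_comm]
    refine Finset.sum_congr rfl fun i _ => ?_
    rw [Finset.mul_sum]
    refine Finset.sum_congr rfl fun l _ => ?_
    rw [hBapp, mul_pow, Real.sq_sqrt (hPnn i)]
  have h4 : ∀ i : Fin m, ∑ l, (v i l) ^ 2 ≤ M ^ 2 := by
    intro i
    have hle : _root_.enorm (v i) ≤ M :=
      le_ciSup (f := fun i => _root_.enorm (v i))
        (Set.Finite.bddAbove (Set.finite_range _)) i
    have := pow_le_pow_left₀ (enorm_nonneg' _) hle 2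
    rwa [enorm_sq'] at this
  have htr : ∑ i, P i i = 1 := by
    simpa [Matrix.trace, Matrix.diag] using hPtr
  have h5 : ∑ i, P i i * ∑ l, (v i l) ^ 2 ≤ M ^ 2 := by
    calc ∑ i, P i i * ∑ l, (v i l) ^ 2
        ≤ ∑ i, P i i * M ^ 2 :=
          Finset.sum_le_sum fun i _ => mul_le_mul_of_nonneg_left (h4 i) (hPnn i)
      _ = M ^ 2 := by rw [← Finset.sum_mul, htr, one_mul]
  have key : (Real.sqrt n * smin B) ^ 2 ≤ M ^ 2 := by
    have : (n : ℝ) * smin B ^ 2 ≤ M ^ 2 := by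
      calc (n : ℝ) * smin B ^ 2 = smin B ^ 2 * ∑ l : Fin n, ∑ j, (u j l) ^ 2 := by
            rw [h2, mul_comm]
        _ = ∑ l : Fin n, smin B ^ 2 * ∑ j, (u j l) ^ 2 := by rw [Finset.mul_sum]
        _ ≤ ∑ l : Fin n, ∑ i, (B.mulVec (fun j => u j l) i) ^ 2 :=
            Finset.sum_le_sum fun l _ => h1 l
        _ = ∑ i, P i i * ∑ l, (v i l) ^ 2 := h3
        _ ≤ M ^ 2 := h5
    rwa [mul_pow, Real.sq_sqrt (Nat.cast_nonneg n)]
  have hnn : 0 ≤ Real.sqrt n * smin B := mul_nonneg (Real.sqrt_nonneg _) hs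
  calc Real.sqrt n * smin B = Real.sqrt ((Real.sqrt n * smin B) ^ 2) :=
        (Real.sqrt_sq hnn).symm
    _ ≤ Real.sqrt (M ^ 2) := Real.sqrt_le_sqrt key
    _ = M := Real.sqrt_sq hMnn
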